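/- Let k be a positive integer and let F be a nonempty finite simple graph in which every vertex has degree exactly 2k and every cycle has length at least 6. Suppose G_1, …, G_t are subgraphs of F such that every edge of F is an edge of some G_i, each G_i restricted to its set of non-isolated vertices is a co-interval graph, and every vertex of F is a non-isolated vertex of at most s of the G_i. Then s ≥ k. In particular, box_ℓ(Fᶜ) ≥ k for the complement Fᶜ of F. -/

import Mathlib

universe u

/-- A graph is an interval graph if its vertices can be assigned nonempty closed
intervals of `ℝ` so that distinct vertices are adjacent iff their intervals meet. -/
def IsIntervalGraph {V : Type*} (G : SimpleGraph V) : Prop :=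
  ∃ I : V → Set ℝ,
    (∀ v, ∃ a b : ℝ, a ≤ b ∧ I v = Set.Icc a b) ∧
    ∀ u v : V, u ≠ v → (G.Adj u v ↔ (I u ∩ I v).Nonempty)

/-- A co-interval graph is the complement of an interval graph. -/
def IsCoIntervalGraph {V : Type*} (G : SimpleGraph V) : Prop :=
  IsIntervalGraph Gᶜ

/-- `G` is a vertex-disjoint union of co-interval graphs: its vertex set can be
partitioned (here via the fibers of a map `c`) so that every edge joins two vertices of
the same part and the restriction to each part is a co-interval graph. -/
def IsUnionCoIntervalGraph {V : Type u} (G : SimpleGraph V) : Prop :=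
  ∃ (ι : Type u) (c : V → ι),
    (∀ u v : V, G.Adj u v → c u = c v) ∧
    ∀ i : ι, IsCoIntervalGraph (G.induce {v | c v = i})

/-- There is a covering of the edges of `Hᶜ` by finitely many subgraphs
`G 0, …, G (t-1)` of `Hᶜ`, each of which restricted to its non-isolated vertices is a
co-interval graph, such that every vertex is a non-isolated vertex of at most `s`
of them. -/
def LocalCoverLE {V : Type u} (H : SimpleGraph V) (s : ℕ) : Prop :=
  ∃ (t : ℕ) (G : Fin t → SimpleGraph V),
    (∀ i, G i ≤ Hᶜ) ∧
    (∀ u v : V, Hᶜ.Adj u v → ∃ i, (G i).Adj u v) ∧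
    (∀ i, IsCoIntervalGraph ((G i).induce (G i).support)) ∧
    ∀ v : V, {i : Fin t | v ∈ (G i).support}.ncard ≤ s

/-- The local boxicity of `H`. -/
noncomputable def localBoxicity {V : Type u} (H : SimpleGraph V) : ℕ :=
  sInf {s : ℕ | LocalCoverLE H s}

/-- The union boxicity of `H`: the least `k` such that `Hᶜ` is covered by `k`
subgraphs, each a vertex-disjoint union of co-interval graphs. -/
noncomputable def unionBoxicity {V : Type u} (H : SimpleGraph V) : ℕ :=
  sInf {k : ℕ | ∃ G : Fin k → SimpleGraph V,
    (∀ i, G i ≤ Hᶜ) ∧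
    (∀ u v : V, Hᶜ.Adj u v → ∃ i, (G i).Adj u v) ∧
    ∀ i, IsUnionCoIntervalGraph (G i)}

/-- The boxicity of `H`: the least `d` such that `H` is the intersection of `d`
interval graphs on its vertex set. -/
noncomputable def boxicity {V : Type u} (H : SimpleGraph V) : ℕ :=
  sInf {d : ℕ | ∃ G : Fin d → SimpleGraph V,
    (∀ i, IsIntervalGraph (G i)) ∧
    ∀ u v : V, u ≠ v → (H.Adj u v ↔ ∀ i, (G i).Adj u v)}

section Aux
open SimpleGraph Walk


-- getVert vs support indexing
lemma getVert_support_getElem {V} {G : SimpleGraph V} {u v : V} (w : G.Walk u v)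
    {i : ℕ} (h : i < w.support.length) : w.support[i] = w.getVert i := by
  induction w generalizing i with
  | nil => simp at h; simp [h]
  | cons hadj p ih =>
    cases i with
    | zero => simp [SimpleGraph.Walk.getVert_zero]
    | succ n =>
      simp only [Walk.support_cons, List.getElem_cons_succ, Walk.getVert_cons_succ]
      exact ih (by simpa [Walk.length_support] using (by simpa [Walk.support_cons] using h))

lemma cycle_getVert_inj {V} {G : SimpleGraph V} {v : V} {w : G.Walk v v} (hc : w.IsCycle)
    {i j : ℕ} (hi : i < w.length) (hj : j < w.length) (hij : w.getVert i = w.getVert j) :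
    i = j := by
  have hnd : w.support.tail.Nodup := hc.2
  have hlen : w.support.length = w.length + 1 := Walk.length_support w
  have htl : w.support.tail.length = w.length := by
    cases w with
    | nil => simp at hc
    | cons h p => simp [Walk.support_cons, Walk.length_support]
  -- key: for 1 ≤ m ≤ length, getVert m = support.tail[m-1]
  have key : ∀ m : ℕ, (hm : m < w.length) → w.support.tail[m]'(by omega) = w.getVert (m+1) := by
    intro m hm
    have : w.support.tail[m]'(by omega) = w.support[m+1]'(by omega) := by
      cases w with
      | nil => simp at hc
      | cons h p => simp [Walk.support_cons]
    rw [this, getVert_support_getElem]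
  -- getVert 0 = v = getVert length; v occurs in tail only at last position
  have hv : w.support.tail[w.length - 1]'(by omega) = v := by
    have h1 : w.length - 1 < w.length := by omega
    have := key (w.length - 1) h1
    rw [this]
    have : w.length - 1 + 1 = w.length := by omega
    rw [this, Walk.getVert_length]
  rcases Nat.eq_zero_or_pos i with hi0 | hi0 <;> rcases Nat.eq_zero_or_pos j with hj0 | hj0
  · omega
  · exfalso
    subst hi0
    rw [Walk.getVert_zero] at hij
    have := key (j-1) (by omega)
    rw [(by omega : j - 1 + 1 = j)] at this
    rw [← hij] at this
    have := List.Nodup.getElem_inj_iff hnd |>.mp (this.trans hv.symm)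
    omega
  · exfalso
    subst hj0
    rw [Walk.getVert_zero] at hij
    have := key (i-1) (by omega)
    rw [(by omega : i - 1 + 1 = i)] at this
    rw [hij] at this
    have := List.Nodup.getElem_inj_iff hnd |>.mp (this.trans hv.symm)
    omega
  · have h1 := key (i-1) (by omega)
    have h2 := key (j-1) (by omega)
    rw [(by omega : i - 1 + 1 = i)] at h1
    rw [(by omega : j - 1 + 1 = j)] at h2
    have := List.Nodup.getElem_inj_iff hnd |>.mp (h1.trans (hij.trans h2.symm))
    omega

lemma isCycle_tri {W : Type*} {F : SimpleGraph W} {a b c : W}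
    (hab : F.Adj a b) (hbc : F.Adj b c) (hca : F.Adj c a) :
    ∃ w : F.Walk a a, w.IsCycle ∧ w.length = 3 := by
  refine ⟨cons hab (cons hbc (cons hca nil)), ?_, by simp⟩
  have h1 := hab.ne
  have h2 := hbc.ne
  have h3 := hca.ne
  simp [Walk.isCycle_def, Walk.isTrail_def, Sym2.eq_iff, List.Nodup]
  aesop

lemma isCycle_quad {W : Type*} {F : SimpleGraph W} {a b c d : W}
    (hab : F.Adj a b) (hbc : F.Adj b c) (hcd : F.Adj c d) (hda : F.Adj d a)
    (hac : a ≠ c) (hbd : b ≠ d) :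
    ∃ w : F.Walk a a, w.IsCycle ∧ w.length = 4 := by
  refine ⟨cons hab (cons hbc (cons hcd (cons hda nil))), ?_, by simp⟩
  have h1 := hab.ne
  have h2 := hbc.ne
  have h3 := hcd.ne
  have h4 := hda.ne
  simp [Walk.isCycle_def, Walk.isTrail_def, Sym2.eq_iff, List.Nodup]
  aesop

lemma isCycle_penta {W : Type*} {F : SimpleGraph W} {a b c d e : W}
    (hab : F.Adj a b) (hbc : F.Adj b c) (hcd : F.Adj c d) (hde : F.Adj d e) (hea : F.Adj e a)
    (hac : a ≠ c) (had : a ≠ d) (hbd : b ≠ d) (hbe : b ≠ e) (hce : c ≠ e) :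
    ∃ w : F.Walk a a, w.IsCycle ∧ w.length = 5 := by
  refine ⟨cons hab (cons hbc (cons hcd (cons hde (cons hea nil)))), ?_, by simp⟩
  have h1 := hab.ne
  have h2 := hbc.ne
  have h3 := hcd.ne
  have h4 := hde.ne
  have h5 := hea.ne
  simp [Walk.isCycle_def, Walk.isTrail_def, Sym2.eq_iff, List.Nodup]
  aesop


-- real interval helper
lemma icc_helper {a1 a2 b1 b2 : ℝ} (ha : a1 ≤ a2) (hb : b1 ≤ b2)
    (hab : ¬ (Set.Icc a1 a2 ∩ Set.Icc b1 b2).Nonempty) :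
    a2 < b1 ∨ b2 < a1 := by
  by_contra h
  push_neg at h
  exact hab ⟨max a1 b1, ⟨⟨le_max_left _ _, max_le ha h.1⟩, ⟨le_max_right _ _, max_le h.2 hb⟩⟩⟩

lemma cross_point {a2 : ℝ} {A B C : Set ℝ} {c1 c2 : ℝ} (hC : C = Set.Icc c1 c2)
    (hac : (A ∩ C).Nonempty) (hbc : (B ∩ C).Nonempty)
    (hA : ∀ x ∈ A, x ≤ a2) (hB : ∀ x ∈ B, a2 ≤ x) : a2 ∈ C := by
  subst hC
  obtain ⟨x, hxA, hx1, hx2⟩ := hac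
  obtain ⟨y, hyB, hy1, hy2⟩ := hbc
  exact ⟨le_trans hx1 (hA x hxA), le_trans (hB y hyB) hy2⟩

lemma twoK2free {V : Type*} {H : SimpleGraph V}
    (hco : IsCoIntervalGraph (H.induce H.support))
    {a b c d : V} (hab : H.Adj a b) (hcd : H.Adj c d)
    (hac : a ≠ c) (had : a ≠ d) (hbc : b ≠ c) (hbd : b ≠ d) :
    H.Adj a c ∨ H.Adj a d ∨ H.Adj b c ∨ H.Adj b d := by
  by_contra hcon
  push_neg at hcon
  obtain ⟨h1, h2, h3, h4⟩ := hcon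
  obtain ⟨I, hIcc, hadj⟩ := hco
  have ha : a ∈ H.support := ⟨b, hab⟩
  have hb : b ∈ H.support := ⟨a, hab.symm⟩
  have hc : c ∈ H.support := ⟨d, hcd⟩
  have hd : d ∈ H.support := ⟨c, hcd.symm⟩
  -- adjacency translations
  have key : ∀ (u v : V) (hu : u ∈ H.support) (hv : v ∈ H.support), u ≠ v →
      (¬ H.Adj u v ↔ (I ⟨u, hu⟩ ∩ I ⟨v, hv⟩).Nonempty) := by
    intro u v hu hv huv
    have := hadj ⟨u, hu⟩ ⟨v, hv⟩ (by simpa [Subtype.ext_iff] using huv)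
    rw [← this]
    constructor
    · intro hn
      exact ⟨by simpa [Subtype.ext_iff] using huv, by simpa using hn⟩
    · intro hadj2
      have := hadj2.2
      simpa using this
  have hAB : ¬ (I ⟨a, ha⟩ ∩ (I ⟨b, hb⟩)).Nonempty := by
    intro hn
    exact ((key a b ha hb hab.ne).mpr hn) hab
  have hCD : ¬ (I ⟨c, hc⟩ ∩ (I ⟨d, hd⟩)).Nonempty := by
    intro hn
    exact ((key c d hc hd hcd.ne).mpr hn) hcd
  have hAC : (I ⟨a, ha⟩ ∩ (I ⟨c, hc⟩)).Nonempty := (key a c ha hc hac).mp h1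
  have hAD : (I ⟨a, ha⟩ ∩ (I ⟨d, hd⟩)).Nonempty := (key a d ha hd had).mp h2
  have hBC : (I ⟨b, hb⟩ ∩ (I ⟨c, hc⟩)).Nonempty := (key b c hb hc hbc).mp h3
  have hBD : (I ⟨b, hb⟩ ∩ (I ⟨d, hd⟩)).Nonempty := (key b d hb hd hbd).mp h4
  obtain ⟨a1, a2, ha12, hA⟩ := hIcc ⟨a, ha⟩
  obtain ⟨b1, b2, hb12, hB⟩ := hIcc ⟨b, hb⟩
  obtain ⟨c1, c2, hc12, hC⟩ := hIcc ⟨c, hc⟩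
  obtain ⟨d1, d2, hd12, hD⟩ := hIcc ⟨d, hd⟩
  rw [hA, hB] at hAB
  rcases icc_helper ha12 hb12 hAB with hlt | hlt
  · -- (I ⟨a, ha⟩) left of (I ⟨b, hb⟩) : a2 separates
    have hCpt : a2 ∈ (I ⟨c, hc⟩) := cross_point hC hAC hBC
      (fun x hx => by rw [hA] at hx; exact hx.2)
      (fun x hx => by rw [hB] at hx; exact le_trans hlt.le hx.1)
    have hDpt : a2 ∈ (I ⟨d, hd⟩) := cross_point hD hAD hBD
      (fun x hx => by rw [hA] at hx; exact hx.2)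
      (fun x hx => by rw [hB] at hx; exact le_trans hlt.le hx.1)
    exact hCD ⟨a2, hCpt, hDpt⟩
  · have hCpt : b2 ∈ (I ⟨c, hc⟩) := cross_point hC hBC hAC
      (fun x hx => by rw [hB] at hx; exact hx.2)
      (fun x hx => by rw [hA] at hx; exact le_trans hlt.le hx.1)
    have hDpt : b2 ∈ (I ⟨d, hd⟩) := cross_point hD hBD hAD
      (fun x hx => by rw [hB] at hx; exact hx.2)
      (fun x hx => by rw [hA] at hx; exact le_trans hlt.le hx.1)
    exact hCD ⟨b2, hCpt, hDpt⟩

-- If an acyclic finite graph has an edge, it has a vertex of degree 1.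
lemma exists_leaf {V : Type*} [Fintype V] {H : SimpleGraph V} [DecidableRel H.Adj]
    (hac : H.IsAcyclic) {x y : V} (hxy : H.Adj x y) :
    ∃ u : V, H.degree u = 1 := by
  classical
  set S : Set ℕ := {n | ∃ (u v : V) (p : H.Walk u v), p.IsPath ∧ p.length = n} with hS
  have hne : S.Nonempty := ⟨1, x, y, SimpleGraph.Walk.cons hxy SimpleGraph.Walk.nil,
    by simp [hxy.ne], by simp⟩
  have hbdd : BddAbove S := by
    refine ⟨Fintype.card V, ?_⟩
    rintro n ⟨u, v, p, hp, rfl⟩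
    exact (hp.length_lt).le
  set N := sSup S with hN
  have hNS : N ∈ S := Nat.sSup_mem hne hbdd
  obtain ⟨u, v, p, hp, hlen⟩ := hNS
  have hN1 : 1 ≤ N := le_csSup hbdd ⟨x, y, SimpleGraph.Walk.cons hxy SimpleGraph.Walk.nil,
    by simp [hxy.ne], by simp⟩
  have hnotnil : ¬ p.Nil := by
    rw [SimpleGraph.Walk.not_nil_iff_lt_length]; omega
  -- the unique neighbor of u is p.getVert 1
  have hadj1 : H.Adj u (p.getVert 1) := p.adj_snd hnotnil
  have huniq : ∀ w : V, H.Adj u w → w = p.getVert 1 := by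
    intro w hw
    by_contra hne1
    by_cases hmem : w ∈ p.support
    · -- takeUntil gives a path u → w of length ≥ 2; but edge gives a path of length 1
      set q := p.takeUntil w hmem with hq
      have hqp : q.IsPath := hp.takeUntil hmem
      have hql : 2 ≤ q.length := by
        rcases Nat.lt_or_ge q.length 2 with h2 | h2
        · interval_cases h : q.length
          · exact absurd (SimpleGraph.Walk.eq_of_length_eq_zero h) hw.ne
          · -- q.length = 1 : then p.getVert 1 = w
            exfalso
            apply hne1
            have hspec := p.take_spec hmem
            have : p.getVert 1 = (q.append (p.dropUntil w hmem)).getVert 1 := by rw [hspec]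
            rw [SimpleGraph.Walk.getVert_append] at this
            simp only [h, SimpleGraph.Walk.getVert_zero, if_neg (lt_irrefl 1),
              Nat.sub_self] at this
            exact this.symm
            
        · exact h2
      have : (⟨q, hqp⟩ : H.Path u w) = ⟨SimpleGraph.Walk.cons hw SimpleGraph.Walk.nil,
          by simp [hw.ne]⟩ := hac.path_unique _ _
      have := congrArg (fun r : H.Path u w => r.1.length) this
      simp at this
      omega
    · -- extend the path
      have hext : (SimpleGraph.Walk.cons hw.symm p).IsPath := hp.cons hmem
      have : N + 1 ∈ S := ⟨w, v, _, hext, by simp [hlen]⟩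
      have := le_csSup hbdd this
      omega
  refine ⟨u, ?_⟩
  have : H.neighborFinset u = {p.getVert 1} := by
    ext w
    simp only [SimpleGraph.mem_neighborFinset, Finset.mem_singleton]
    exact ⟨fun h => huniq w h, fun h => h ▸ hadj1⟩
  rw [SimpleGraph.degree, this, Finset.card_singleton]

lemma forest_card_aux {V : Type*} [Fintype V] (n : ℕ) :
    ∀ (H : SimpleGraph V), H.edgeSet.ncard ≤ n → H.IsAcyclic →
      H.edgeSet.ncard ≤ H.support.ncard := by
  classical
  induction n with
  | zero => intro H h _; omega
  | succ n ih =>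
    intro H h hac
    by_cases hE : H.edgeSet = ∅
    · simp [hE]
    · obtain ⟨e, he⟩ := Set.nonempty_iff_ne_empty.mpr hE
      induction e with
      | _ x y =>
        rw [SimpleGraph.mem_edgeSet] at he
        obtain ⟨u, hu⟩ := exists_leaf hac he
        obtain ⟨w, hw⟩ : ∃ w, H.Adj u w := by
          have : 0 < (H.neighborFinset u).card := by rw [← SimpleGraph.degree]; omega
          obtain ⟨w, hwmem⟩ := Finset.card_pos.mp this
          exact ⟨w, (SimpleGraph.mem_neighborFinset _ _ _).mp hwmem⟩
        set H' := H.deleteEdges (H.incidenceSet u) with hH'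
        have hEdel : H'.edgeSet = H.edgeSet \ H.incidenceSet u :=
          SimpleGraph.edgeSet_deleteEdges _
        have hinc : (H.incidenceSet u).ncard = 1 := by
          have : (H.incidenceSet u).ncard = H.degree u := by
            rw [Set.ncard_eq_toFinset_card', ← SimpleGraph.card_incidenceFinset_eq_degree]
            apply Finset.card_nbij id (by intro a ha; simpa [SimpleGraph.mem_incidenceFinset, Set.mem_toFinset] using ha)
              (Set.injOn_id _)
            intro a ha
            exact ⟨a, by simpa [SimpleGraph.mem_incidenceFinset, Set.mem_toFinset] using ha, rfl⟩
          omega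
        have hcard' : H'.edgeSet.ncard = H.edgeSet.ncard - 1 := by
          rw [hEdel, Set.ncard_diff (H.incidenceSet_subset u) (Set.toFinite _), hinc]
        have hpos : 1 ≤ H.edgeSet.ncard := by
          have he2 : s(x, y) ∈ H.edgeSet := H.mem_edgeSet.mpr he
          have := (Set.ncard_pos (s := H.edgeSet) (Set.toFinite _)).mpr ⟨_, he2⟩
          omega
        have hac' : H'.IsAcyclic := fun v c hc =>
          hac (c.mapLe (H.deleteEdges_le _)) (hc.mapLe _)
        have hsupp : H'.support ⊆ H.support \ {u} := by
          rintro v ⟨z, hz⟩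
          change (H.deleteEdges (H.incidenceSet u)).Adj v z at hz
          rw [SimpleGraph.deleteEdges_adj] at hz
          refine ⟨⟨z, hz.1⟩, ?_⟩
          simp only [Set.mem_singleton_iff]
          rintro rfl
          exact hz.2 ⟨hz.1, Sym2.mem_mk_left _ _⟩
        have h1 : H'.edgeSet.ncard ≤ n := by omega
        have h2 := ih H' h1 hac'
        have husupp : u ∈ H.support := ⟨w, hw⟩
        have h3 : H'.support.ncard + 1 ≤ H.support.ncard := by
          have hle := Set.ncard_le_ncard hsupp (Set.toFinite _)
          rw [Set.ncard_diff_singleton_of_mem husupp] at hle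
          have h4 : 1 ≤ H.support.ncard := (Set.ncard_pos (Set.toFinite _)).mpr ⟨u, husupp⟩
          omega
        omega

lemma key_lemma {V : Type} [Fintype V] [Nonempty V] (k : ℕ) (hk : 0 < k)
    (F : SimpleGraph V)
    (hreg : ∀ v : V, (F.neighborSet v).ncard = 2 * k)
    (hgirth : ∀ (v : V) (w : F.Walk v v), w.IsCycle → 6 ≤ w.length)
    (t s : ℕ) (G : Fin t → SimpleGraph V)
    (hsub : ∀ i, G i ≤ F)
    (hcov : ∀ u v : V, F.Adj u v → ∃ i, (G i).Adj u v)
    (hco : ∀ i, IsCoIntervalGraph ((G i).induce (G i).support))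
    (hloc : ∀ v : V, {i : Fin t | v ∈ (G i).support}.ncard ≤ s) :
    k ≤ s := by
  classical
  -- no short cycles in F
  have hno3 : ∀ a b c : V, F.Adj a b → F.Adj b c → F.Adj c a → False := by
    intro a b c h1 h2 h3
    obtain ⟨w, hcyc, hlen⟩ := isCycle_tri h1 h2 h3
    have := hgirth _ w hcyc; omega
  have hno4 : ∀ a b c d : V, F.Adj a b → F.Adj b c → F.Adj c d → F.Adj d a →
      a ≠ c → b ≠ d → False := by
    intro a b c d h1 h2 h3 h4 h5 h6
    obtain ⟨w, hcyc, hlen⟩ := isCycle_quad h1 h2 h3 h4 h5 h6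
    have := hgirth _ w hcyc; omega
  have hno5 : ∀ a b c d e : V, F.Adj a b → F.Adj b c → F.Adj c d → F.Adj d e → F.Adj e a →
      a ≠ c → a ≠ d → b ≠ d → b ≠ e → c ≠ e → False := by
    intro a b c d e h1 h2 h3 h4 h5 h6 h7 h8 h9 h10
    obtain ⟨w, hcyc, hlen⟩ := isCycle_penta h1 h2 h3 h4 h5 h6 h7 h8 h9 h10
    have := hgirth _ w hcyc; omega
  -- each G i is acyclic
  have hacyc : ∀ i, (G i).IsAcyclic := by
    intro i v w hc
    have h6 : 6 ≤ w.length := by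
      have := hgirth v (w.mapLe (hsub i)) (hc.mapLe _)
      simpa using this
    set x0 := w.getVert 0
    set x1 := w.getVert 1
    set x2 := w.getVert 2
    set x3 := w.getVert 3
    set x4 := w.getVert 4
    have a01 : (G i).Adj x0 x1 := w.adj_getVert_succ (by omega)
    have a12 : (G i).Adj x1 x2 := w.adj_getVert_succ (by omega)
    have a23 : (G i).Adj x2 x3 := w.adj_getVert_succ (by omega)
    have a34 : (G i).Adj x3 x4 := w.adj_getVert_succ (by omega)
    have hd : ∀ m l : ℕ, m < 5 → l < 5 → m ≠ l → w.getVert m ≠ w.getVert l := by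
      intro m l hm hl hml heq
      exact hml (cycle_getVert_inj hc (by omega) (by omega) heq)
    have d02 : x0 ≠ x2 := hd 0 2 (by omega) (by omega) (by omega)
    have d03 : x0 ≠ x3 := hd 0 3 (by omega) (by omega) (by omega)
    have d04 : x0 ≠ x4 := hd 0 4 (by omega) (by omega) (by omega)
    have d13 : x1 ≠ x3 := hd 1 3 (by omega) (by omega) (by omega)
    have d14 : x1 ≠ x4 := hd 1 4 (by omega) (by omega) (by omega)
    have d24 : x2 ≠ x4 := hd 2 4 (by omega) (by omega) (by omega)
    have cross := twoK2free (hco i) a01 a34 d03 d04 d13 d14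
    have F01 : F.Adj x0 x1 := hsub i a01
    have F12 : F.Adj x1 x2 := hsub i a12
    have F23 : F.Adj x2 x3 := hsub i a23
    have F34 : F.Adj x3 x4 := hsub i a34
    rcases cross with h | h | h | h
    · exact hno4 x0 x1 x2 x3 F01 F12 F23 (hsub i h).symm d02 d13
    · exact hno5 x0 x1 x2 x3 x4 F01 F12 F23 F34 (hsub i h).symm d02 d03 d13 d14 d24
    · exact hno3 x1 x2 x3 F12 F23 (hsub i h).symm
    · exact hno4 x1 x2 x3 x4 F12 F23 F34 (hsub i h).symm d13 d24
  -- edge bound for each G i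
  have hEi : ∀ i, (G i).edgeSet.ncard ≤ (G i).support.ncard := fun i =>
    forest_card_aux ((G i).edgeSet.ncard) (G i) le_rfl (hacyc i)
  set n := Fintype.card V with hn
  -- |E(F)| = k * n
  have hdeg : ∀ v : V, F.degree v = 2 * k := by
    intro v
    have h1 : (F.neighborSet v).ncard = F.degree v := by
      rw [Set.ncard_eq_toFinset_card', Set.toFinset_card, F.card_neighborSet_eq_degree]
    rw [← h1, hreg]
  have hEF : F.edgeFinset.card = k * n := by
    have h := F.sum_degrees_eq_twice_card_edges
    rw [Finset.sum_congr rfl (fun v _ => hdeg v)] at h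
    simp only [Finset.sum_const, Finset.card_univ, smul_eq_mul] at h
    have h2 : Fintype.card V * (2 * k) = 2 * (k * n) := by rw [hn]; ring
    omega
  -- cover
  have hcover : F.edgeFinset.card ≤ ∑ i, (G i).edgeFinset.card := by
    have hsubE : F.edgeFinset ⊆ Finset.univ.biUnion (fun i => (G i).edgeFinset) := by
      intro e he
      induction e with
      | _ a b =>
        rw [SimpleGraph.mem_edgeFinset, SimpleGraph.mem_edgeSet] at he
        obtain ⟨i, hi⟩ := hcov a b he
        exact Finset.mem_biUnion.mpr ⟨i, Finset.mem_univ i,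
          (SimpleGraph.mem_edgeFinset).mpr ((SimpleGraph.mem_edgeSet _).mpr hi)⟩
    exact le_trans (Finset.card_le_card hsubE) (Finset.card_biUnion_le)
  -- edgeFinset card = edgeSet ncard
  have hEcard : ∀ i, (G i).edgeFinset.card = (G i).edgeSet.ncard := by
    intro i
    rw [Set.ncard_eq_toFinset_card', Set.toFinset_card]
    exact SimpleGraph.edgeFinset_card
  -- support ncard as filter card
  have hScard : ∀ i, (G i).support.ncard = (Finset.univ.filter
      (fun v => v ∈ (G i).support)).card := by
    intro i
    rw [Set.ncard_eq_toFinset_card']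
    congr 1
    ext v
    simp
  have hVcard : ∀ v : V, ({i : Fin t | v ∈ (G i).support}).ncard = (Finset.univ.filter
      (fun i : Fin t => v ∈ (G i).support)).card := by
    intro v
    rw [Set.ncard_eq_toFinset_card']
    congr 1
    ext i
    simp
  -- double counting
  have hdc : ∑ i, (G i).support.ncard ≤ n * s := by
    calc ∑ i, (G i).support.ncard
        = ∑ i, (Finset.univ.filter (fun v => v ∈ (G i).support)).card := by
          exact Finset.sum_congr rfl fun i _ => hScard i
      _ = ∑ i, ∑ v : V, (if v ∈ (G i).support then 1 else 0) := by
          exact Finset.sum_congr rfl fun i _ => Finset.card_filter _ _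
      _ = ∑ v : V, ∑ i, (if v ∈ (G i).support then 1 else 0) := Finset.sum_comm
      _ = ∑ v : V, (Finset.univ.filter (fun i : Fin t => v ∈ (G i).support)).card := by
          exact Finset.sum_congr rfl fun v _ => (Finset.card_filter _ _).symm
      _ ≤ ∑ _v : V, s := by
          refine Finset.sum_le_sum fun v _ => ?_
          rw [← hVcard v]; exact hloc v
      _ = n * s := by simp [hn, mul_comm]
  -- combine
  have hmain : k * n ≤ n * s := by
    have h2 : F.edgeFinset.card ≤ ∑ i, (G i).support.ncard := by
      refine le_trans hcover (Finset.sum_le_sum fun i _ => ?_)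
      rw [hEcard i]; exact hEi i
    omega
  have hnpos : 0 < n := Fintype.card_pos
  have hmain' : n * k ≤ n * s := by rw [mul_comm] at hmain; exact hmain
  exact Nat.le_of_mul_le_mul_left hmain' hnpos

end Aux

/-- Let `F` be a nonempty finite `2k`-regular graph of girth at least 6.
If subgraphs `G 0, …, G (t-1)` of `F` cover all edges of `F`, each restricted to its
non-isolated vertices is a co-interval graph, and every vertex is a non-isolated vertex
of at most `s` of them, then `s ≥ k`; in particular `box_ℓ(Fᶜ) ≥ k`. -/
theorem stmt_9 {V : Type} [Fintype V] [Nonempty V] (k : ℕ) (hk : 0 < k)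
    (F : SimpleGraph V)
    (hreg : ∀ v : V, (F.neighborSet v).ncard = 2 * k)
    (hgirth : ∀ (v : V) (w : F.Walk v v), w.IsCycle → 6 ≤ w.length)
    (t s : ℕ) (G : Fin t → SimpleGraph V)
    (hsub : ∀ i, G i ≤ F)
    (hcov : ∀ u v : V, F.Adj u v → ∃ i, (G i).Adj u v)
    (hco : ∀ i, IsCoIntervalGraph ((G i).induce (G i).support))
    (hloc : ∀ v : V, {i : Fin t | v ∈ (G i).support}.ncard ≤ s) :
    k ≤ s ∧ k ≤ localBoxicity Fᶜ := by
  have hcc : (Fᶜ)ᶜ = F := compl_compl F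
  refine ⟨key_lemma k hk F hreg hgirth t s G hsub hcov hco hloc, ?_⟩
  rw [localBoxicity]
  refine le_csInf ⟨s, t, G, by rw [hcc]; exact hsub, by rw [hcc]; exact hcov, hco, hloc⟩ ?_
  rintro b ⟨t', G', h1, h2, h3, h4⟩
  rw [hcc] at h1 h2
  exact key_lemma k hk F hreg hgirth t' b G' h1 h2 h3 h4
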